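/- Define random variables by the recursion Y_0 = ω_0 γ, X_l = min{Y_l^{(1)},…,Y_l^{(d_R−1)}} for 0 ≤ l < T, and Y_l = ω_l γ + X_{l−1}^{(1)} + … + X_{l−1}^{(d_L−1)} for 0 < l < T, where all copies are mutually independent and each Y_l uses a fresh independent copy of γ. Then for every t ≥ 0 and every 0 ≤ s < l < T: E[e^{−tX_l}] ≤ (E[e^{−tX_s}])^{(d_L−1)^{l−s}} · Π_{k=0}^{l−s−1} ((d_R−1)·E[e^{−tω_{l−k}γ}])^{(d_L−1)^k}. -/

import Mathlib

open MeasureTheory ProbabilityTheory Real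

/-- The min-sum recursion on a `(d_L, d_R)`-regular tree: `Y_0 = ω_0·γ`; for `0 ≤ l < T`,
`X_l` is the minimum of `d_R − 1` mutually independent copies of `Y_l`; and for `0 < l < T`,
`Y_l = ω_l·γ' + X_{l−1}^{(1)} + … + X_{l−1}^{(d_L−1)}` with a fresh copy `γ'` of `γ` and
mutually independent copies of `X_{l−1}`, all mutually independent. -/
structure MinSumRecursion {Ω : Type*} [MeasurableSpace Ω] (μ : MeasureTheory.Measure Ω)
    (γ : Ω → ℝ) (ω : ℕ → ℝ) (dL dR T : ℕ) (X Y : ℕ → Ω → ℝ) : Prop where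
  hY0 : IdentDistrib (Y 0) (fun o => ω 0 * γ o) μ μ
  hX : ∀ l < T, ∃ Z : Fin (dR - 1) → Ω → ℝ,
      iIndepFun Z μ ∧
      (∀ i, IdentDistrib (Z i) (Y l) μ μ) ∧
      ∀ o, X l o = sInf (Set.range fun i => Z i o)
  hY : ∀ l, 0 < l → l < T → ∃ (g : Ω → ℝ) (Z : Fin (dL - 1) → Ω → ℝ),
      IdentDistrib g γ μ μ ∧
      (∀ i, IdentDistrib (Z i) (X (l - 1)) μ μ) ∧
      iIndepFun
        (fun o : Option (Fin (dL - 1)) => Option.elim o g Z) μ ∧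
      ∀ o, Y l o = ω l * g o + ∑ i, Z i o

/-- Recursive Laplace-transform bound (Arora–Daskalakis–Steurer): for the min-sum process on a
`(d_L,d_R)`-regular tree, for every `t ≥ 0` and `0 ≤ s < l < T`,
`E[e^{−tX_l}] ≤ (E[e^{−tX_s}])^{(d_L−1)^{l−s}} · Π_{k=0}^{l−s−1}
  ((d_R−1)·E[e^{−tω_{l−k}γ}])^{(d_L−1)^k}`. -/
theorem my_iIndepFun_congr {Ω ι : Type*} [MeasurableSpace Ω] {μ : Measure Ω} {β : ι → Type*}
    {m : ∀ i, MeasurableSpace (β i)} {f g : ∀ i, Ω → β i}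
    (hf : iIndepFun f μ) (h : ∀ i, f i =ᵐ[μ] g i) : iIndepFun g μ := by
  rw [iIndepFun_iff_measure_inter_preimage_eq_mul] at hf ⊢
  intro S sets hsets
  have h1 : ∀ i ∈ S, μ (g i ⁻¹' sets i) = μ (f i ⁻¹' sets i) := by
    intro i _
    apply measure_congr
    filter_upwards [h i] with o ho
    show (g i o ∈ sets i) = (f i o ∈ sets i)
    rw [ho]
  have h2 : μ (⋂ i ∈ S, g i ⁻¹' sets i) = μ (⋂ i ∈ S, f i ⁻¹' sets i) := by
    apply measure_congr
    have hae : ∀ᵐ o ∂μ, ∀ i ∈ S, f i o = g i o :=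
      (ae_ball_iff S.countable_toSet).2 (fun i _ => h i)
    filter_upwards [hae] with o ho
    show (o ∈ ⋂ i ∈ S, g i ⁻¹' sets i) = (o ∈ ⋂ i ∈ S, f i ⁻¹' sets i)
    simp only [Set.mem_iInter, Set.mem_preimage, eq_iff_iff]
    constructor <;> intro hh j hj
    · rw [ho j hj]; exact hh j hj
    · rw [← ho j hj]; exact hh j hj
  rw [h2, hf S hsets]
  exact (Finset.prod_congr rfl h1).symm

theorem my_step_bound
    {Ω : Type*} [MeasurableSpace Ω] (μ : MeasureTheory.Measure Ω) [IsProbabilityMeasure μ]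
    (γ : Ω → ℝ) (ω : ℕ → ℝ)
    (dL dR T : ℕ) (hdL : 2 ≤ dL) (hdR : 2 ≤ dR)
    (X Y : ℕ → Ω → ℝ)
    (hrec : MinSumRecursion μ γ ω dL dR T X Y)
    (hmeasγ : Measurable γ) (hmeasX : ∀ l, Measurable (X l))
    (hintX : ∀ (l : ℕ) (t : ℝ), 0 ≤ t → Integrable (fun o => exp (-t * X l o)) μ)
    (hintY : ∀ (l : ℕ) (t : ℝ), 0 ≤ t → Integrable (fun o => exp (-t * Y l o)) μ)
    (t : ℝ) (ht : 0 ≤ t) (l : ℕ) (hl : 0 < l) (hlT : l < T) :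
    ∫ o, exp (-t * X l o) ∂μ ≤
      (((dR : ℝ) - 1) * ∫ o, exp (-t * (ω l * γ o)) ∂μ) *
        (∫ o, exp (-t * X (l - 1) o) ∂μ) ^ (dL - 1) := by
  have hφ : Measurable fun x : ℝ => exp (-t * x) := (measurable_id.const_mul (-t)).exp
  -- Part A : min bound
  have hA : ∫ o, exp (-t * X l o) ∂μ ≤ ((dR : ℝ) - 1) * ∫ o, exp (-t * Y l o) ∂μ := by
    obtain ⟨Z, hindZ, hidZ, hXeq⟩ := hrec.hX l hlT
    haveI : Nonempty (Fin (dR - 1)) := ⟨⟨0, by omega⟩⟩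
    have hidZ' : ∀ i, IdentDistrib (fun o => exp (-t * Z i o)) (fun o => exp (-t * Y l o)) μ μ :=
      fun i => (hidZ i).comp hφ
    have hintZ : ∀ i, Integrable (fun o => exp (-t * Z i o)) μ :=
      fun i => (hidZ' i).integrable_iff.2 (hintY l t ht)
    have hpt : ∀ o, exp (-t * X l o) ≤ ∑ i, exp (-t * Z i o) := by
      intro o
      rw [hXeq o]
      have hmem : sInf (Set.range fun i => Z i o) ∈ Set.range fun i => Z i o :=
        (Set.range_nonempty _).csInf_mem (Set.finite_range _)
      obtain ⟨i0, hi0⟩ := hmem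
      rw [← hi0]
      exact Finset.single_le_sum (f := fun i => exp (-t * Z i o))
        (fun i _ => (exp_pos _).le) (Finset.mem_univ i0)
    calc ∫ o, exp (-t * X l o) ∂μ
        ≤ ∫ o, ∑ i, exp (-t * Z i o) ∂μ :=
          integral_mono (hintX l t ht) (integrable_finset_sum _ fun i _ => hintZ i) hpt
      _ = ∑ i, ∫ o, exp (-t * Z i o) ∂μ := integral_finset_sum _ (fun i _ => hintZ i)
      _ = ∑ _i : Fin (dR - 1), ∫ o, exp (-t * Y l o) ∂μ :=
          Finset.sum_congr rfl fun i _ => (hidZ' i).integral_eq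
      _ = ((dR : ℝ) - 1) * ∫ o, exp (-t * Y l o) ∂μ := by
          rw [Finset.sum_const, Finset.card_univ, Fintype.card_fin, nsmul_eq_mul,
            Nat.cast_sub (by omega : 1 ≤ dR), Nat.cast_one]
  -- Part B : factorization
  have hB : ∫ o, exp (-t * Y l o) ∂μ =
      (∫ o, exp (-t * (ω l * γ o)) ∂μ) * (∫ o, exp (-t * X (l - 1) o) ∂μ) ^ (dL - 1) := by
    obtain ⟨g, Z, hgid, hZid, hind, hYeq⟩ := hrec.hY l hl hlT
    have hg : AEMeasurable g μ := hgid.aemeasurable_fst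
    have hZ : ∀ i, AEMeasurable (Z i) μ := fun i => (hZid i).aemeasurable_fst
    set g' := hg.mk g with hg'def
    set Z' : Fin (dL - 1) → Ω → ℝ := fun i => (hZ i).mk (Z i) with hZ'def
    have hgeq : g =ᵐ[μ] g' := hg.ae_eq_mk
    have hZeq : ∀ i, Z i =ᵐ[μ] Z' i := fun i => (hZ i).ae_eq_mk
    have hg'meas : Measurable g' := hg.measurable_mk
    have hZ'meas : ∀ i, Measurable (Z' i) := fun i => (hZ i).measurable_mk
    have hindF : iIndepFun
        (fun j : Option (Fin (dL - 1)) => Option.elim j g' Z') μ :=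
      my_iIndepFun_congr hind (fun j => by
        cases j with
        | none => exact hgeq
        | some i => exact hZeq i)
    set W : Option (Fin (dL - 1)) → Ω → ℝ := fun j => Option.elim j (fun o => ω l * g' o) Z'
      with hWdef
    have hindW : iIndepFun W μ := by
      have hcomp := hindF.comp
        (fun j : Option (Fin (dL - 1)) => Option.elim j (fun x : ℝ => ω l * x) (fun _ => id))
        (fun j => by
          cases j with
          | none => exact measurable_id.const_mul _
          | some i => exact measurable_id)
      have heq : W = fun j : Option (Fin (dL - 1)) =>
          (Option.elim j (fun x : ℝ => ω l * x) (fun _ => id)) ∘ (Option.elim j g' Z') := by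
        funext j o; cases j <;> rfl
      rw [heq]
      exact hcomp
    have hWmeas : ∀ j, Measurable (W j) := fun j => by
      cases j with
      | none => exact hg'meas.const_mul _
      | some i => exact hZ'meas i
    have hmgf := hindW.mgf_sum (t := -t) hWmeas Finset.univ
    have hYsum : ∫ o, exp (-t * Y l o) ∂μ = mgf (∑ j, W j) μ (-t) := by
      simp only [mgf]
      apply integral_congr_ae
      have hZall : ∀ᵐ o ∂μ, ∀ i, Z i o = Z' i o := ae_all_iff.2 hZeq
      filter_upwards [hgeq, hZall] with o ho hZo
      rw [hYeq o]
      have hsum : (∑ j, W j) o = ω l * g' o + ∑ i, Z' i o := by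
        rw [Finset.sum_apply]
        rw [Fintype.sum_option (f := fun j => W j o)]
        rfl
      have hsum2 : ∑ i, Z i o = ∑ i, Z' i o := Finset.sum_congr rfl fun i _ => hZo i
      rw [hsum, ho, hsum2]
    have hideng : IdentDistrib g' γ μ μ :=
      ⟨hg'meas.aemeasurable, hmeasγ.aemeasurable, by
        rw [← Measure.map_congr hgeq, hgid.map_eq]⟩
    have hφ2 : Measurable fun x : ℝ => exp (-t * (ω l * x)) :=
      ((measurable_id.const_mul (ω l)).const_mul (-t)).exp
    have h0 : mgf (W none) μ (-t) = ∫ o, exp (-t * (ω l * γ o)) ∂μ :=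
      (hideng.comp hφ2).integral_eq
    have hidenZ : ∀ i, IdentDistrib (Z' i) (X (l - 1)) μ μ := fun i =>
      ⟨(hZ'meas i).aemeasurable, (hmeasX _).aemeasurable, by
        rw [← Measure.map_congr (hZeq i), (hZid i).map_eq]⟩
    have hi : ∀ i, mgf (W (some i)) μ (-t) = ∫ o, exp (-t * X (l - 1) o) ∂μ := fun i =>
      ((hidenZ i).comp hφ).integral_eq
    rw [hYsum, hmgf, Fintype.prod_option, h0]
    congr 1
    rw [Finset.prod_congr rfl (fun i _ => hi i), Finset.prod_const, Finset.card_univ,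
      Fintype.card_fin]
  calc ∫ o, exp (-t * X l o) ∂μ
      ≤ ((dR : ℝ) - 1) * ∫ o, exp (-t * Y l o) ∂μ := hA
    _ = (((dR : ℝ) - 1) * ∫ o, exp (-t * (ω l * γ o)) ∂μ) *
        (∫ o, exp (-t * X (l - 1) o) ∂μ) ^ (dL - 1) := by rw [hB]; ring

theorem laplace_recursion_bound
    {Ω : Type*} [MeasurableSpace Ω] (μ : MeasureTheory.Measure Ω) [IsProbabilityMeasure μ]
    (γ : Ω → ℝ) (ω : ℕ → ℝ) (hω : ∀ l, 0 ≤ ω l)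
    (dL dR T : ℕ) (hdL : 2 ≤ dL) (hdR : 2 ≤ dR)
    (X Y : ℕ → Ω → ℝ)
    (hrec : MinSumRecursion μ γ ω dL dR T X Y)
    (hmeasγ : Measurable γ) (hmeasX : ∀ l, Measurable (X l)) (hmeasY : ∀ l, Measurable (Y l))
    (hintγ : ∀ t : ℝ, 0 ≤ t → Integrable (fun o => exp (-t * γ o)) μ)
    (hintX : ∀ (l : ℕ) (t : ℝ), 0 ≤ t → Integrable (fun o => exp (-t * X l o)) μ)
    (hintY : ∀ (l : ℕ) (t : ℝ), 0 ≤ t → Integrable (fun o => exp (-t * Y l o)) μ)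
    (t : ℝ) (ht : 0 ≤ t) (s l : ℕ) (hsl : s < l) (hlT : l < T) :
    ∫ o, exp (-t * X l o) ∂μ ≤
      (∫ o, exp (-t * X s o) ∂μ) ^ ((dL - 1) ^ (l - s)) *
        ∏ k ∈ Finset.range (l - s),
          (((dR : ℝ) - 1) * ∫ o, exp (-t * (ω (l - k) * γ o)) ∂μ) ^ ((dL - 1) ^ k) := by
  have hstep := my_step_bound μ γ ω dL dR T hdL hdR X Y hrec hmeasγ hmeasX hintX hintY t ht
  have hdR1 : (0:ℝ) ≤ (dR : ℝ) - 1 := by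
    have : (1:ℝ) ≤ (dR : ℝ) := by exact_mod_cast (by omega : 1 ≤ dR)
    linarith
  have hBnn : ∀ k, 0 ≤ ((dR : ℝ) - 1) * ∫ o, exp (-t * (ω k * γ o)) ∂μ := fun k =>
    mul_nonneg hdR1 (integral_nonneg fun o => (exp_pos _).le)
  have hAnn : 0 ≤ ∫ o, exp (-t * X s o) ∂μ := integral_nonneg fun o => (exp_pos _).le
  have key : ∀ n : ℕ, ∀ l : ℕ, l = s + n + 1 → l < T →
      ∫ o, exp (-t * X l o) ∂μ ≤
        (∫ o, exp (-t * X s o) ∂μ) ^ ((dL - 1) ^ (l - s)) *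
          ∏ k ∈ Finset.range (l - s),
            (((dR : ℝ) - 1) * ∫ o, exp (-t * (ω (l - k) * γ o)) ∂μ) ^ ((dL - 1) ^ k) := by
    intro n
    induction n with
    | zero =>
      intro l hl hlT
      have hls : l - s = 1 := by omega
      have hl1 : l - 1 = s := by omega
      have h := hstep l (by omega) hlT
      rw [hl1] at h
      rw [hls]
      simp only [Finset.prod_range_one, pow_one, pow_zero, Nat.sub_zero]
      calc ∫ o, exp (-t * X l o) ∂μ
          ≤ (((dR : ℝ) - 1) * ∫ o, exp (-t * (ω l * γ o)) ∂μ) *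
            (∫ o, exp (-t * X s o) ∂μ) ^ (dL - 1) := h
        _ = (∫ o, exp (-t * X s o) ∂μ) ^ (dL - 1) *
            (((dR : ℝ) - 1) * ∫ o, exp (-t * (ω l * γ o)) ∂μ) := by ring
    | succ n ih =>
      intro l hl hlT
      have hl1T : l - 1 < T := by omega
      have h := hstep l (by omega) hlT
      have hih := ih (l - 1) (by omega) hl1T
      have hXnn : 0 ≤ ∫ o, exp (-t * X (l - 1) o) ∂μ := integral_nonneg fun o => (exp_pos _).le
      have hls : l - s = n + 2 := by omega
      have hl1s : l - 1 - s = n + 1 := by omega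
      rw [hl1s] at hih
      rw [hls]
      have hpow : (∫ o, exp (-t * X (l - 1) o) ∂μ) ^ (dL - 1) ≤
          ((∫ o, exp (-t * X s o) ∂μ) ^ ((dL - 1) ^ (n + 1)) *
            ∏ k ∈ Finset.range (n + 1),
              (((dR : ℝ) - 1) * ∫ o, exp (-t * (ω (l - 1 - k) * γ o)) ∂μ) ^ ((dL - 1) ^ k))
            ^ (dL - 1) :=
        pow_le_pow_left₀ hXnn hih _
      have hP : (∏ k ∈ Finset.range (n + 1),
            (((dR : ℝ) - 1) * ∫ o, exp (-t * (ω (l - 1 - k) * γ o)) ∂μ) ^ ((dL - 1) ^ k))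
            ^ (dL - 1) =
          ∏ k ∈ Finset.range (n + 1),
            (((dR : ℝ) - 1) * ∫ o, exp (-t * (ω (l - (k + 1)) * γ o)) ∂μ) ^ ((dL - 1) ^ (k + 1)) := by
        rw [← Finset.prod_pow]
        refine Finset.prod_congr rfl fun k _ => ?_
        rw [← pow_mul, ← pow_succ, Nat.sub_sub, Nat.add_comm]
      calc ∫ o, exp (-t * X l o) ∂μ
          ≤ (((dR : ℝ) - 1) * ∫ o, exp (-t * (ω l * γ o)) ∂μ) *
            (∫ o, exp (-t * X (l - 1) o) ∂μ) ^ (dL - 1) := h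
        _ ≤ (((dR : ℝ) - 1) * ∫ o, exp (-t * (ω l * γ o)) ∂μ) *
            ((∫ o, exp (-t * X s o) ∂μ) ^ ((dL - 1) ^ (n + 1)) *
              ∏ k ∈ Finset.range (n + 1),
                (((dR : ℝ) - 1) * ∫ o, exp (-t * (ω (l - 1 - k) * γ o)) ∂μ) ^ ((dL - 1) ^ k))
              ^ (dL - 1) := mul_le_mul_of_nonneg_left hpow (hBnn l)
        _ = (∫ o, exp (-t * X s o) ∂μ) ^ ((dL - 1) ^ (n + 2)) *
            ∏ k ∈ Finset.range (n + 2),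
              (((dR : ℝ) - 1) * ∫ o, exp (-t * (ω (l - k) * γ o)) ∂μ) ^ ((dL - 1) ^ k) := by
            rw [mul_pow, ← pow_mul, ← pow_succ, hP,
              Finset.prod_range_succ' (fun k =>
                (((dR : ℝ) - 1) * ∫ o, exp (-t * (ω (l - k) * γ o)) ∂μ) ^ ((dL - 1) ^ k)) (n + 1)]
            simp only [Nat.sub_zero, pow_zero, pow_one]
            ring
  exact key (l - s - 1) l (by omega) hlT
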